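/- Let r₁ > r₂ > … > r_k > 0 be distinct positive moduli, and for each l ∈ {1, …, k} let λ_{l,1} ≠ λ_{l,2} be two distinct points with |λ_{l,1}| = |λ_{l,2}| = r_l. Then for any prescribed values c_{l,i} ∈ ℂ (l = 1, …, k, i = 1, 2) there exists a polynomial p ∈ P_{2k−1}(r2) such that p(λ_{l,i}) = c_{l,i} for all l and i. -/

import Mathlib

/-- Evaluation of the polyanalytic polynomial in `P_j(r2)` with coefficients `α`
(supported in `{0,…,j}`):  `p(λ) = ∑_{k=0}^{⌊j/2⌋} (α_{2k} + α_{2k+1} λ)|λ|^{2k}`. -/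
noncomputable def evalR2 (j : ℕ) (α : ℕ → ℂ) (z : ℂ) : ℂ :=
  ∑ k ∈ Finset.range (j / 2 + 1), (α (2 * k) + α (2 * k + 1) * z) * ((‖z‖ : ℝ) : ℂ) ^ (2 * k)

/-- Interpolation with `P_{2k-1}(r2)`: given strictly decreasing positive moduli
`r 0 > r 1 > … > r (k-1) > 0` and, for each modulus, two distinct points of that
modulus, arbitrary values can be interpolated by some `p ∈ P_{2k-1}(r2)`. -/
theorem interpolation_r2 (k : ℕ) (r : Fin k → ℝ) (hpos : ∀ l, 0 < r l)
    (hanti : StrictAnti r)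
    (pts : Fin k → Fin 2 → ℂ)
    (hne : ∀ l, pts l 0 ≠ pts l 1)
    (habs : ∀ l i, ‖pts l i‖ = r l)
    (c : Fin k → Fin 2 → ℂ) :
    ∃ α : ℕ → ℂ, (∀ m, 2 * k - 1 < m → α m = 0) ∧
      ∀ l i, evalR2 (2 * k - 1) α (pts l i) = c l i := by
  rcases Nat.eq_zero_or_pos k with hk | hk
  · subst hk
    exact ⟨fun _ => 0, fun _ _ => rfl, fun l => l.elim0⟩
  -- nodes
  set v : Fin k → ℂ := fun l => ((r l : ℂ)) ^ 2 with hv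
  have hvinj : Set.InjOn v (Finset.univ : Finset (Fin k)) := by
    intro a _ b _ hab
    apply hanti.injective
    have : ((r a : ℂ)) ^ 2 = ((r b : ℂ)) ^ 2 := hab
    have h2 : (r a) ^ 2 = (r b) ^ 2 := by exact_mod_cast this
    nlinarith [hpos a, hpos b]
  -- the linear data on each circle
  set B : Fin k → ℂ := fun l => (c l 0 - c l 1) / (pts l 0 - pts l 1) with hB
  set A : Fin k → ℂ := fun l => c l 0 - B l * pts l 0 with hA
  have hAB : ∀ l i, A l + B l * pts l i = c l i := by
    intro l i
    have hd : pts l 0 - pts l 1 ≠ 0 := sub_ne_zero.mpr (hne l)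
    fin_cases i
    · simp [hA]
    · change A l + B l * pts l 1 = c l 1
      simp only [hA, hB]
      field_simp
      ring
  set P : Polynomial ℂ := Lagrange.interpolate Finset.univ v A with hP
  set Q : Polynomial ℂ := Lagrange.interpolate Finset.univ v B with hQ
  have hPd : P.degree < (k : ℕ) := by
    have := Lagrange.degree_interpolate_lt A hvinj
    rwa [Finset.card_univ, Fintype.card_fin] at this
  have hQd : Q.degree < (k : ℕ) := by
    have := Lagrange.degree_interpolate_lt B hvinj
    rwa [Finset.card_univ, Fintype.card_fin] at this
  refine ⟨fun m => if m % 2 = 0 then P.coeff (m / 2) else Q.coeff (m / 2), ?_, ?_⟩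
  · intro m hm
    have hmk : 2 * k ≤ m := by omega
    have hm2 : (k : ℕ) ≤ m / 2 := by omega
    have h1 : P.coeff (m / 2) = 0 :=
      Polynomial.coeff_eq_zero_of_degree_lt (lt_of_lt_of_le hPd (by exact_mod_cast hm2))
    have h2 : Q.coeff (m / 2) = 0 :=
      Polynomial.coeff_eq_zero_of_degree_lt (lt_of_lt_of_le hQd (by exact_mod_cast hm2))
    simp [h1, h2]
  · intro l i
    have hrange : (2 * k - 1) / 2 + 1 = k := by omega
    have habs' : ((‖pts l i‖ : ℂ)) = (r l : ℂ) := by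
      exact_mod_cast congrArg Complex.ofReal (habs l i)
    have hPnd : P.natDegree < k := by
      rcases eq_or_ne P 0 with h | h
      · simpa [h] using hk
      · exact (Polynomial.natDegree_lt_iff_degree_lt h).2 hPd
    have hQnd : Q.natDegree < k := by
      rcases eq_or_ne Q 0 with h | h
      · simpa [h] using hk
      · exact (Polynomial.natDegree_lt_iff_degree_lt h).2 hQd
    have hPe : P.eval (v l) = A l := Lagrange.eval_interpolate_at_node A hvinj (Finset.mem_univ l)
    have hQe : Q.eval (v l) = B l := Lagrange.eval_interpolate_at_node B hvinj (Finset.mem_univ l)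
    have hPsum : ∑ j ∈ Finset.range k, P.coeff j * (v l) ^ j = A l := by
      rw [← hPe, Polynomial.eval_eq_sum_range' hPnd]
    have hQsum : ∑ j ∈ Finset.range k, Q.coeff j * (v l) ^ j = B l := by
      rw [← hQe, Polynomial.eval_eq_sum_range' hQnd]
    rw [evalR2, hrange]
    have hterm : ∀ j ∈ Finset.range k,
        ((if (2 * j) % 2 = 0 then P.coeff ((2 * j) / 2) else Q.coeff ((2 * j) / 2)) +
          (if (2 * j + 1) % 2 = 0 then P.coeff ((2 * j + 1) / 2) else Q.coeff ((2 * j + 1) / 2))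
            * pts l i) * ((‖pts l i‖ : ℂ)) ^ (2 * j)
        = P.coeff j * (v l) ^ j + (Q.coeff j * (v l) ^ j) * pts l i := by
      intro j _
      have : (2 * j) % 2 = 0 := by omega
      have h1 : (2 * j) / 2 = j := by omega
      have h2 : (2 * j + 1) % 2 = 1 := by omega
      have h3 : (2 * j + 1) / 2 = j := by omega
      rw [this, h2, h1, h3, habs']
      simp only [hv, pow_mul, if_pos rfl, Nat.one_ne_zero, if_false, if_true]
      ring
    rw [Finset.sum_congr rfl hterm, Finset.sum_add_distrib, ← Finset.sum_mul, hPsum, hQsum]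
    exact hAB l i
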